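/- Let N and m be positive integers and let x₁, …, x_m : Fin N → ℂ be pairwise orthogonal sequences (i.e., Σ_t x_j(t)·conj(x_l(t)) = 0 for j ≠ l) such that |x_j(t)| = 1 for all j and all t. Let s = x₁ + ⋯ + x_m. Then the peak-to-mean-envelope-power ratio of s satisfies max_t |s(t)|² ≤ m · ((1/N)·Σ_t |s(t)|²); equivalently, since (1/N)·Σ_t |s(t)|² = m, the PMEPR max_t |s(t)|² / ((1/N)·Σ_t |s(t)|²) is at most m. -/

import Mathlib

open Finset Complex in
/-- the sum `s` of `m` pairwise-orthogonal unit-modulus sequences of length `N`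
has peak power at most `m` times its mean power; since the mean power equals `m`, the
PMEPR is at most `m`. -/
theorem stmt_5 (N m : ℕ) (hN : 0 < N) (hm : 0 < m)
    (x : Fin m → Fin N → ℂ)
    (horth : ∀ j l, j ≠ l → ∑ t, x j t * (starRingEnd ℂ) (x l t) = 0)
    (hmod : ∀ j t, ‖x j t‖ = 1)
    (s : Fin N → ℂ) (hs : s = fun t => ∑ j, x j t) :
    (∀ t, ‖s t‖ ^ 2 ≤ m * ((1 / N : ℝ) * ∑ t', ‖s t'‖ ^ 2)) ∧
      (1 / N : ℝ) * ∑ t', ‖s t'‖ ^ 2 = m := by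
  have hsum : (∑ t', (‖s t'‖) ^ 2 : ℝ) = m * N := by
    have h1 : (∑ t', (s t' * (starRingEnd ℂ) (s t')) : ℂ) = (m : ℂ) * N := by
      have hexp : ∀ t', s t' * (starRingEnd ℂ) (s t')
          = ∑ j, ∑ l, x j t' * (starRingEnd ℂ) (x l t') := by
        intro t'
        simp only [hs, map_sum, Finset.sum_mul, Finset.mul_sum]
        exact Finset.sum_comm
      calc (∑ t', s t' * (starRingEnd ℂ) (s t'))
          = ∑ t', ∑ j, ∑ l, x j t' * (starRingEnd ℂ) (x l t') :=
            Finset.sum_congr rfl fun t' _ => hexp t'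
        _ = ∑ j, ∑ t', ∑ l, x j t' * (starRingEnd ℂ) (x l t') := Finset.sum_comm
        _ = ∑ j, ∑ l, ∑ t', x j t' * (starRingEnd ℂ) (x l t') :=
            Finset.sum_congr rfl fun j _ => Finset.sum_comm
        _ = ∑ j : Fin m, (N : ℂ) := by
            refine Finset.sum_congr rfl fun j _ => ?_
            rw [Finset.sum_eq_single j]
            · have hone : ∀ t' : Fin N, x j t' * (starRingEnd ℂ) (x j t') = 1 := by
                intro t'
                rw [Complex.mul_conj]
                norm_cast
                rw [← Complex.sq_norm, hmod]
                norm_num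
              simp [hone]
            · intro l _ hl
              exact horth j l (Ne.symm hl)
            · simp
        _ = (m : ℂ) * N := by simp [mul_comm]
    have h2 : ∀ t', ((‖s t'‖) ^ 2 : ℂ) = s t' * (starRingEnd ℂ) (s t') := by
      intro t'
      rw [Complex.mul_conj, ← Complex.sq_norm]
      push_cast
      ring
    have h3 : ((∑ t', (‖s t'‖) ^ 2 : ℝ) : ℂ) = (m : ℂ) * N := by
      push_cast
      rw [Finset.sum_congr rfl fun t' _ => h2 t']
      exact h1
    exact_mod_cast h3
  have hmean : (1 / N : ℝ) * ∑ t', ‖s t'‖ ^ 2 = m := by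
    rw [hsum]
    field_simp
  refine ⟨fun t => ?_, hmean⟩
  rw [hmean]
  have habs : ‖s t‖ ≤ (m : ℝ) := by
    rw [hs]
    calc ‖∑ j, x j t‖ ≤ ∑ j, ‖x j t‖ := by
          exact norm_sum_le _ _
      _ = m := by simp [hmod]
  calc ‖s t‖ ^ 2 ≤ (m : ℝ) ^ 2 :=
        pow_le_pow_left₀ (norm_nonneg _) habs 2
    _ = (m : ℝ) * (m : ℝ) := sq (m : ℝ)
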